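/- arXiv:1903.07248 — 3 statements merged into one kernel-verified Lean document; each statement's English description precedes it below -/
import Mathlib

section
/- Let k be an algebraically closed field and let C be a connected scheme of finite type over k of pure dimension one, with irreducible decomposition C = C₁ ∪ ⋯ ∪ C_ℓ. If C does not form a tree, then there exists a non-trivial cycle sequence (a₁, …, aₙ) whose entries a₁, …, aₙ are pairwise distinct. -/
/-!
Statement 0 (Lemma 4.10 of the paper): if a connected pure one-dimensional scheme of
finite type over an algebraically closed field does not form a tree, then there is a
non-trivial cycle sequence with pairwise distinct entries.
-/

open AlgebraicGeometry

universe u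

/-- One application of operation (a) to a cyclically-read finite sequence: if two
cyclically consecutive entries are equal, remove one of them.  By the convention
`a_{n+1} := a₁`, a sequence of length one always reduces to the empty sequence. -/
def StepA {α : Type*} (l l' : List α) : Prop :=
  (∃ x, l = [x] ∧ l' = []) ∨
    ∃ (n : ℕ) (x : α) (rest : List α), l.rotate n = x :: x :: rest ∧ l' = x :: rest

/-- One application of operation (b): if `a_i = a_{i+2}` cyclically, remove `a_i` and
`a_{i+1}` (for a sequence of length two the conventions `a₃ := a₁`, `a₄ := a₂` make the
operation always applicable, yielding the empty sequence). -/
def StepB {α : Type*} (l l' : List α) : Prop :=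
  (∃ (n : ℕ) (x y : α), l.rotate n = [x, y] ∧ l' = []) ∨
    ∃ (n : ℕ) (x y : α) (rest : List α), l.rotate n = x :: y :: x :: rest ∧ l' = x :: rest

/-- One application of operation (a) or of operation (b). -/
def StepAB {α : Type*} (l l' : List α) : Prop := StepA l l' ∨ StepB l l'

/-- `r` is an (a)-reduction of `l`: it is obtained from `l` by finitely many
applications of operation (a), and operation (a) no longer applies to it. -/
def IsAReduction {α : Type*} (l r : List α) : Prop :=
  Relation.ReflTransGen StepA l r ∧ ∀ r', ¬ StepA r r'

/-- `l` has trivial (a,b)-reduction: operations (a) and (b) reduce it to length `0`. -/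
def HasTrivialABReduction {α : Type*} (l : List α) : Prop :=
  Relation.ReflTransGen StepAB l []

/-- A label on a topological space `X`: either a subset of `X` (meant to be an
irreducible component, `Sum.inl`) or a point of `X` (meant to be a closed point,
`Sum.inr`). -/
abbrev Label (X : Type*) := Set X ⊕ X

/-- A label is valid if it is an irreducible component or a closed point. -/
def Label.IsValid {X : Type*} [TopologicalSpace X] : Label X → Prop
  | .inl Z => Z ∈ irreducibleComponents X
  | .inr p => IsClosed ({p} : Set X)

/-- The dimension of a label: `1` for an irreducible component, `0` for a closed point. -/
def Label.dim {X : Type*} : Label X → ℕ := Sum.elim (fun _ => 1) (fun _ => 0)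

/-- The cyclic successor of an index in a finite sequence. -/
def cyclicSucc {α : Type*} (b : List α) (i : Fin b.length) : Fin b.length :=
  ⟨(i + 1) % b.length, Nat.mod_lt _ i.pos⟩

/-- The cyclic predecessor of an index in a finite sequence. -/
def cyclicPred {α : Type*} (b : List α) (i : Fin b.length) : Fin b.length :=
  ⟨(i + b.length - 1) % b.length, Nat.mod_lt _ i.pos⟩

/-- Condition (2) in the definition of a cycle sequence, imposed on the (a)-reduction
`b`: cyclically, consecutive entries have different dimensions, and every
zero-dimensional entry lies in both its cyclic neighbours. -/
def CyclicCond {X : Type*} (b : List (Label X)) : Prop :=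
  (∀ i : Fin b.length, (b.get i).dim ≠ (b.get (cyclicSucc b i)).dim) ∧
  ∀ i : Fin b.length, ∀ p : X, b.get i = Sum.inr p →
    (∃ Z : Set X, b.get (cyclicPred b i) = Sum.inl Z ∧ p ∈ Z) ∧
    (∃ Z : Set X, b.get (cyclicSucc b i) = Sum.inl Z ∧ p ∈ Z)

/-- A cycle sequence: every entry is an irreducible component or a closed point, and
some (a)-reduction of it satisfies the cyclic alternation and incidence conditions. -/
def IsCycleSeq {X : Type*} [TopologicalSpace X] (l : List (Label X)) : Prop :=
  (∀ a ∈ l, a.IsValid) ∧ ∃ b, IsAReduction l b ∧ CyclicCond b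

/-- `FormsTree S` for a (finite) collection `S` of irreducible components: any single
curve forms a tree, and `S ∪ {Z}` forms a tree if `S` forms a tree and the union of the
members of `S` meets `Z` in exactly one point. -/
inductive FormsTree {X : Type*} : Set (Set X) → Prop
  | single (Z : Set X) : FormsTree {Z}
  | insert {S : Set (Set X)} (Z : Set X) (hZ : Z ∉ S) (hS : FormsTree S) (p : X)
      (hp : (⋃₀ S) ∩ Z = {p}) : FormsTree (Insert.insert Z S)

section Auxiliary

open Set Order TopologicalSpace

lemma preirr_val {X : Type*} [TopologicalSpace X] {Z t : Set X} (h : IsPreirreducible t)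
    (ht : t ⊆ Z) : IsPreirreducible ((Subtype.val : Z → X) ⁻¹' t) := by
  rintro U V hU hV ⟨⟨x, hxZ⟩, hxt, hxU⟩ ⟨⟨y, hyZ⟩, hyt, hyU⟩
  rw [isOpen_induced_iff] at hU hV
  obtain ⟨U', hU', rfl⟩ := hU
  obtain ⟨V', hV', rfl⟩ := hV
  obtain ⟨z, hzt, hzU, hzV⟩ := h U' V' hU' hV' ⟨x, hxt, hxU⟩ ⟨y, hyt, hyU⟩
  exact ⟨⟨z, ht hzt⟩, hzt, hzU, hzV⟩

lemma closed_singleton_of_mem_two {X : Type*} [TopologicalSpace X] [T0Space X]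
    {Z Z' : Set X} (hZ : Z ∈ irreducibleComponents X) (hZ' : Z' ∈ irreducibleComponents X)
    (hne : Z ≠ Z') (hdim : topologicalKrullDim Z = 1) {p : X} (hp : p ∈ Z) (hp' : p ∈ Z') :
    IsClosed ({p} : Set X) := by
  by_contra hcl
  have hsub : closure ({p} : Set X) ⊆ Z :=
    closure_minimal (singleton_subset_iff.2 hp) (isClosed_of_mem_irreducibleComponents _ hZ)
  have hq : ∃ q ∈ closure ({p} : Set X), q ≠ p := by
    by_contra h
    push_neg at h
    have : closure ({p} : Set X) = {p} :=
      subset_antisymm (fun q hqc => h q hqc) subset_closure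
    rw [← this] at hcl; exact hcl isClosed_closure
  obtain ⟨q, hqc, hqp⟩ := hq
  have hqZ : q ∈ Z := hsub hqc
  have hqpc : closure ({q} : Set X) ⊆ closure ({p} : Set X) :=
    closure_minimal (singleton_subset_iff.2 hqc) isClosed_closure
  have hpnotq : p ∉ closure ({q} : Set X) := by
    intro hmem
    have h2 : closure ({p} : Set X) ⊆ closure ({q} : Set X) :=
      closure_minimal (singleton_subset_iff.2 hmem) isClosed_closure
    have : Inseparable p q := by
      rw [inseparable_iff_closure_eq]
      exact subset_antisymm h2 hqpc
    exact hqp this.eq.symm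
  have hpZne : closure ({p} : Set X) ≠ Z := by
    intro hEq
    have hZsub : Z ⊆ Z' := by
      rw [← hEq]
      exact closure_minimal (singleton_subset_iff.2 hp')
        (isClosed_of_mem_irreducibleComponents _ hZ')
    exact hne (subset_antisymm hZsub (hZ.2 hZ'.1 hZsub))
  have hZirr : IsIrreducible Z := hZ.1
  have huniv : (Subtype.val ⁻¹' Z : Set Z) = univ := by ext x; simp [x.2]
  let A : IrreducibleCloseds Z :=
    ⟨Subtype.val ⁻¹' closure {q},
      ⟨⟨⟨q, hqZ⟩, subset_closure rfl⟩,
        preirr_val (isIrreducible_singleton.closure).2 (hqpc.trans hsub)⟩,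
      (isClosed_closure).preimage continuous_subtype_val⟩
  let B : IrreducibleCloseds Z :=
    ⟨Subtype.val ⁻¹' closure {p},
      ⟨⟨⟨p, hp⟩, subset_closure rfl⟩,
        preirr_val (isIrreducible_singleton.closure).2 hsub⟩,
      (isClosed_closure).preimage continuous_subtype_val⟩
  let T : IrreducibleCloseds Z :=
    ⟨univ, by rw [← huniv]; exact ⟨⟨⟨p, hp⟩, hp⟩, preirr_val hZirr.2 subset_rfl⟩, isClosed_univ⟩
  have hAB : A < B := by
    rw [← SetLike.coe_ssubset_coe]
    constructor
    · intro x hx; exact hqpc hx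
    · intro hEq
      exact hpnotq (hEq (show (⟨p, hp⟩ : Z) ∈ (B : Set Z) from subset_closure rfl))
  have hBT : B < T := by
    rw [← SetLike.coe_ssubset_coe]
    constructor
    · intro x _; trivial
    · intro hEq
      apply hpZne
      apply subset_antisymm hsub
      intro z hz
      exact hEq (show (⟨z, hz⟩ : Z) ∈ (T : Set Z) from trivial)
  let s : LTSeries (IrreducibleCloseds Z) :=
    ⟨2, ![A, B, T], by
      intro i
      fin_cases i
      · exact hAB
      · exact hBT⟩
  have h2 := Order.LTSeries.length_le_krullDim s
  rw [show krullDim (IrreducibleCloseds Z) = topologicalKrullDim Z from rfl, hdim] at h2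
  have h3 : ((2:ℕ) : WithBot ℕ∞) ≤ 1 := h2
  exact absurd h3 (by decide)


variable {X : Type*} [TopologicalSpace X]

lemma no_stepA_of_nodup {α : Type*} {l : List α} (hn : l.Nodup) (hl : 3 ≤ l.length)
    (r : List α) : ¬ StepA l r := by
  rintro (⟨x, hx, -⟩ | ⟨n, x, rest, hrot, -⟩)
  · rw [hx] at hl; simp at hl
  · have : (l.rotate n).Nodup := (List.nodup_rotate).2 hn
    rw [hrot] at this
    simp at this

lemma no_stepB_of_nodup {α : Type*} {l : List α} (hn : l.Nodup) (hl : 3 ≤ l.length)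
    (r : List α) : ¬ StepB l r := by
  rintro (⟨n, x, y, hrot, -⟩ | ⟨n, x, y, rest, hrot, -⟩)
  · have := congrArg List.length hrot
    rw [List.length_rotate] at this
    simp at this
    omega
  · have : (l.rotate n).Nodup := (List.nodup_rotate).2 hn
    rw [hrot] at this
    simp at this

lemma cycle_list {m : ℕ} (hm : 2 ≤ m) (Z : ℕ → Set X) (p : ℕ → X)
    (hZv : ∀ i < m, Z i ∈ irreducibleComponents X)
    (hpv : ∀ i < m, IsClosed ({p i} : Set X))
    (hZinj : ∀ i < m, ∀ j < m, Z i = Z j → i = j)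
    (hpinj : ∀ i < m, ∀ j < m, p i = p j → i = j)
    (hp1 : ∀ i < m, p i ∈ Z i) (hp2 : ∀ i < m, p i ∈ Z ((i + 1) % m)) :
    ∃ l : List (Label X), IsCycleSeq l ∧ ¬ HasTrivialABReduction l ∧
      l.Pairwise (· ≠ ·) := by
  set f : Fin (2 * m) → Label X := fun j =>
    if j.val % 2 = 0 then Sum.inl (Z (j.val / 2)) else Sum.inr (p (j.val / 2)) with hf
  have hhalf : ∀ j : Fin (2 * m), j.val / 2 < m := fun j => by omega
  have hfe : ∀ j : Fin (2 * m), j.val % 2 = 0 → f j = Sum.inl (Z (j.val / 2)) := by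
    intro j h; simp only [hf]; rw [if_pos h]
  have hfo : ∀ j : Fin (2 * m), ¬ j.val % 2 = 0 → f j = Sum.inr (p (j.val / 2)) := by
    intro j h; simp only [hf]; rw [if_neg h]
  have hfinj : Function.Injective f := by
    intro j j' hEq
    by_cases h1 : j.val % 2 = 0 <;> by_cases h2 : j'.val % 2 = 0
    · rw [hfe j h1, hfe j' h2, Sum.inl.injEq] at hEq
      have := hZinj _ (hhalf j) _ (hhalf j') hEq
      exact Fin.ext (by omega)
    · rw [hfe j h1, hfo j' h2] at hEq; exact absurd hEq (by simp)
    · rw [hfo j h1, hfe j' h2] at hEq; exact absurd hEq (by simp)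
    · rw [hfo j h1, hfo j' h2, Sum.inr.injEq] at hEq
      have := hpinj _ (hhalf j) _ (hhalf j') hEq
      exact Fin.ext (by omega)
  refine ⟨List.ofFn f, ⟨?_, ?_⟩, ?_, ?_⟩
  · -- validity
    intro a ha
    rw [List.mem_ofFn] at ha
    obtain ⟨j, rfl⟩ := ha
    by_cases h : j.val % 2 = 0
    · rw [hfe j h]; exact hZv _ (hhalf j)
    · rw [hfo j h]; exact hpv _ (hhalf j)
  · -- a-reduction is itself, and cyclic condition
    have hlen : (List.ofFn f).length = 2 * m := List.length_ofFn
    have hnd : (List.ofFn f).Nodup := List.nodup_ofFn.2 hfinj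
    refine ⟨List.ofFn f, ⟨Relation.ReflTransGen.refl,
      fun r => no_stepA_of_nodup hnd (by omega) r⟩, ?_, ?_⟩
    · -- dims differ
      intro i
      rw [List.get_ofFn, List.get_ofFn]
      have h1 : (Fin.cast (by simp) i : Fin (2*m)).val = i.val := rfl
      have h2 : ((Fin.cast (by simp) (cyclicSucc (List.ofFn f) i)) : Fin (2*m)).val
          = (i.val + 1) % (2 * m) := by
        simp [cyclicSucc, hlen]
      have hmod : (i.val + 1) % (2 * m) % 2 = (i.val + 1) % 2 :=
        Nat.mod_mod_of_dvd _ ⟨m, rfl⟩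
      by_cases hp0 : i.val % 2 = 0
      · rw [hfe _ (h1 ▸ hp0), hfo _ (by rw [h2]; omega)]
        simp [Label.dim]
      · rw [hfo _ (h1 ▸ hp0), hfe _ (by rw [h2]; omega)]
        simp [Label.dim]
    · -- incidence
      intro i p0 hEq
      rw [List.get_ofFn] at hEq
      have h1 : (Fin.cast (by simp) i : Fin (2*m)).val = i.val := rfl
      have hiv : i.val < 2 * m := by have := i.isLt; exact lt_of_lt_of_le i.isLt hlen.le
      by_cases hpar : (Fin.cast (by simp) i : Fin (2*m)).val % 2 = 0
      · rw [hfe _ hpar] at hEq; exact absurd hEq (by simp)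
      rw [hfo _ hpar] at hEq
      rw [Sum.inr.injEq] at hEq
      rw [h1] at hpar
      set t := i.val / 2 with ht
      have hodd : i.val = 2 * t + 1 := by omega
      constructor
      · -- predecessor
        refine ⟨Z t, ?_, ?_⟩
        · rw [List.get_ofFn]
          have h3 : ((Fin.cast (by simp) (cyclicPred (List.ofFn f) i)) : Fin (2*m)).val
              = (i.val + 2*m - 1) % (2 * m) := by simp [cyclicPred, hlen]
          have e1 : (i.val + 2*m - 1) % (2*m) = 2 * t := by
            have e2 : i.val + 2*m - 1 = 2*t + 2*m := by omega
            rw [e2, Nat.add_mod_right]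
            exact Nat.mod_eq_of_lt (by omega)
          rw [hfe _ (by rw [h3, e1]; omega)]
          rw [Sum.inl.injEq, h3, e1, Nat.mul_div_cancel_left _ (by norm_num : (0:ℕ) < 2)]
        · rw [← hEq]; exact hp1 t (by omega)
      · -- successor
        refine ⟨Z ((t + 1) % m), ?_, ?_⟩
        · rw [List.get_ofFn]
          have h3 : ((Fin.cast (by simp) (cyclicSucc (List.ofFn f) i)) : Fin (2*m)).val
              = (i.val + 1) % (2 * m) := by simp [cyclicSucc, hlen]
          have e1 : (i.val + 1) % (2*m) = 2 * ((t+1) % m) := by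
            rw [show i.val + 1 = 2 * (t+1) by omega, Nat.mul_mod_mul_left]
          rw [hfe _ (by rw [h3, e1]; omega)]
          rw [Sum.inl.injEq, h3, e1, Nat.mul_div_cancel_left _ (by norm_num : (0:ℕ) < 2)]
        · rw [← hEq]; exact hp2 t (by omega)
  · -- no trivial AB reduction
    intro h
    have hlen : (List.ofFn f).length = 2 * m := List.length_ofFn
    have hnd : (List.ofFn f).Nodup := List.nodup_ofFn.2 hfinj
    rcases (Relation.ReflTransGen.cases_head h) with hh | ⟨c, hc, -⟩
    · have := congrArg List.length hh
      simp [hlen] at this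
      omega
    · rcases hc with h1 | h2
      · exact no_stepA_of_nodup hnd (by omega) c h1
      · exact no_stepB_of_nodup hnd (by omega) c h2
  · exact List.nodup_ofFn.2 hfinj

/-- A combinatorial cycle among a family of sets. -/
def NCycle {X : Type*} (S : Set (Set X)) : Prop :=
  ∃ (m : ℕ) (Z : ℕ → Set X) (p : ℕ → X), 2 ≤ m ∧
    (∀ i < m, Z i ∈ S) ∧
    (∀ i < m, ∀ j < m, Z i = Z j → i = j) ∧
    (∀ i < m, ∀ j < m, p i = p j → i = j) ∧
    (∀ i < m, p i ∈ Z i) ∧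
    (∀ i < m, p i ∈ Z ((i + 1) % m))

/-- A combinatorial path among a family of sets. -/
def NPath {X : Type*} (S : Set (Set X)) (m : ℕ) : Prop :=
  ∃ (Z : ℕ → Set X) (p : ℕ → X),
    (∀ i < m, Z i ∈ S) ∧
    (∀ i < m, ∀ j < m, Z i = Z j → i = j) ∧
    (∀ i, i + 1 < m → ∀ j, j + 1 < m → p i = p j → i = j) ∧
    (∀ i, i + 1 < m → p i ∈ Z i ∩ Z (i + 1))

lemma NPath.mono {X : Type*} {S : Set (Set X)} {m m' : ℕ} (h : NPath S m) (hm : m' ≤ m) :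
    NPath S m' := by
  obtain ⟨Z, p, h1, h2, h3, h4⟩ := h
  exact ⟨Z, p, fun i hi => h1 i (lt_of_lt_of_le hi hm),
    fun i hi j hj => h2 i (lt_of_lt_of_le hi hm) j (lt_of_lt_of_le hj hm),
    fun i hi j hj => h3 i (lt_of_lt_of_le hi hm) j (lt_of_lt_of_le hj hm),
    fun i hi => h4 i (lt_of_lt_of_le hi hm)⟩

lemma NPath.le_ncard {X : Type*} {S : Set (Set X)} (hfin : S.Finite) {m : ℕ}
    (h : NPath S m) : m ≤ S.ncard := by
  obtain ⟨Z, p, h1, h2, -, -⟩ := h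
  classical
  have hsub : ↑((Finset.range m).image Z) ⊆ S := by
    intro x hx
    simp only [Finset.coe_image, Finset.coe_range] at hx
    obtain ⟨i, hi, rfl⟩ := hx
    exact h1 i hi
  have hcard : ((Finset.range m).image Z).card = m := by
    rw [Finset.card_image_of_injOn, Finset.card_range]
    intro i hi j hj hij
    simp only [Finset.coe_range, Set.mem_Iio] at hi hj
    exact h2 i hi j hj hij
  calc m = (((Finset.range m).image Z : Finset (Set X)) : Set (Set X)).ncard := by
          rw [Set.ncard_coe_finset, hcard]
    _ ≤ S.ncard := Set.ncard_le_ncard hsub hfin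

theorem formsTree_of_no_ncycle {X : Type*} :
    ∀ (n : ℕ) (S : Set (Set X)), S.Finite → S.ncard ≤ n → S.Nonempty →
      (∀ A : Set (Set X), A ⊆ S → A.Nonempty → (S \ A).Nonempty →
        ((⋃₀ A) ∩ ⋃₀ (S \ A)).Nonempty) →
      ¬ NCycle S → FormsTree S := by
  intro n
  induction n with
  | zero =>
    intro S hfin hcard hne _ _
    have := hne.ncard_pos hfin
    omega
  | succ n ih =>
    intro S hfin hcard hne hconn hnc
    by_cases hone : S.ncard ≤ 1
    · have h1 : S.ncard = 1 := le_antisymm hone (hne.ncard_pos hfin)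
      obtain ⟨Z, rfl⟩ := Set.ncard_eq_one.mp h1
      exact FormsTree.single Z
    · push_neg at hone
      -- a path of length 2
      obtain ⟨Z₀, hZ₀⟩ := hne
      obtain ⟨Z₁, hZ₁S, hZ₁ne⟩ := Set.exists_ne_of_one_lt_ncard hone Z₀
      have hd : (S \ {Z₀}).Nonempty := ⟨Z₁, hZ₁S, hZ₁ne⟩
      obtain ⟨q0, hq0A, hq0B⟩ := hconn {Z₀} (by simpa) ⟨Z₀, rfl⟩ hd
      rw [Set.sUnion_singleton] at hq0A
      obtain ⟨W0, hW0S, hq0W⟩ := hq0B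
      have path2 : NPath S 2 := by
        refine ⟨fun i => if i = 0 then Z₀ else W0, fun _ => q0, ?_, ?_, ?_, ?_⟩
        · intro i hi
          by_cases h : i = 0
          · simp [h, hZ₀]
          · simp [h, hW0S.1]
        · intro i hi j hj hEq
          simp only at hEq
          have hW0ne : W0 ≠ Z₀ := fun h => hW0S.2 h
          by_cases h1 : i = 0 <;> by_cases h2 : j = 0
          · omega
          · rw [if_pos h1, if_neg h2] at hEq
            exact absurd hEq.symm hW0ne
          · rw [if_neg h1, if_pos h2] at hEq
            exact absurd hEq hW0ne
          · omega
        · intro i hi j hj _; omega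
        · intro i hi
          have : i = 0 := by omega
          subst this
          simp [hq0A, hq0W]
      -- maximal path
      have hbdd : ∀ k, NPath S k → k ≤ S.ncard := fun k hk => hk.le_ncard hfin
      have hex : ∃ m, NPath S m ∧ ¬ NPath S (m + 1) := by
        by_contra h
        push_neg at h
        have hall : ∀ k, NPath S (2 + k) := by
          intro k
          induction k with
          | zero => exact path2
          | succ k ihk => exact h _ ihk
        have := hbdd (2 + S.ncard) (hall _)
        omega
      obtain ⟨m, hpath, hmax⟩ := hex
      have hm2 : 2 ≤ m := by
        by_contra h
        push_neg at h
        exact hmax (path2.mono (by omega))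
      obtain ⟨Z, p, hZS, hZinj, hpinj, hpmem⟩ := hpath
      have hZwS : Z (m - 1) ∈ S := hZS _ (by omega)
      -- the leaf property
      have hleaf : ∀ q, q ∈ Z (m - 1) → q ∈ ⋃₀ (S \ {Z (m - 1)}) → q = p (m - 2) := by
        intro q hqZ hqU
        obtain ⟨W, hWS, hqW⟩ := hqU
        by_contra hqne
        have hcycle : ∀ j, j < m - 1 → q ∈ Z j →
            (∀ s, j ≤ s → s + 1 < m → q ≠ p s) → False := by
          intro j hj hqZj hqp
          apply hnc
          refine ⟨m - 1 - j + 1, fun i => Z (j + i),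
            fun i => if i = m - 1 - j then q else p (j + i), by omega, ?_, ?_, ?_, ?_, ?_⟩
          · intro i hi
            exact hZS _ (by omega)
          · intro i hi i' hi' hEq
            have := hZinj (j + i) (by omega) (j + i') (by omega) hEq
            omega
          · intro i hi i' hi' hEq
            simp only at hEq
            by_cases h1 : i = m - 1 - j <;> by_cases h2 : i' = m - 1 - j
            · omega
            · rw [if_pos h1, if_neg h2] at hEq
              exact absurd hEq (hqp (j + i') (by omega) (by omega))
            · rw [if_neg h1, if_pos h2] at hEq
              exact absurd hEq.symm (hqp (j + i) (by omega) (by omega))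
            · rw [if_neg h1, if_neg h2] at hEq
              have := hpinj (j + i) (by omega) (j + i') (by omega) hEq
              omega
          · intro i hi
            beta_reduce
            by_cases h1 : i = m - 1 - j
            · rw [if_pos h1, h1, show j + (m - 1 - j) = m - 1 by omega]
              exact hqZ
            · rw [if_neg h1]
              exact (hpmem (j + i) (by omega)).1
          · intro i hi
            beta_reduce
            by_cases h1 : i = m - 1 - j
            · rw [if_pos h1, h1, Nat.mod_self]
              exact hqZj
            · rw [if_neg h1, Nat.mod_eq_of_lt (by omega)]
              exact (hpmem (j + i) (by omega)).2
        by_cases hq_is_p : ∃ t, t + 1 < m ∧ q = p t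
        · obtain ⟨t, ht, hqt⟩ := hq_is_p
          have htne : t ≠ m - 2 := fun h => hqne (by rw [hqt, h])
          refine hcycle (t + 1) (by omega) (hqt ▸ (hpmem t (by omega)).2) ?_
          intro s hs hs1 hEq
          have := hpinj t (by omega) s hs1 (hqt ▸ hEq)
          omega
        · push_neg at hq_is_p
          by_cases hqZj : ∃ j, j < m - 1 ∧ q ∈ Z j
          · obtain ⟨j, hj, hqj⟩ := hqZj
            exact hcycle j hj hqj fun s _ hs1 => hq_is_p s hs1
          · push_neg at hqZj
            have hWZ : ∀ i, i < m → Z i ≠ W := by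
              intro i hi hEq
              by_cases h : i = m - 1
              · exact hWS.2 (show W ∈ ({Z (m-1)} : Set (Set X)) from by rw [← hEq, h]; exact rfl)
              · exact hqZj i (by omega) (hEq ▸ hqW)
            apply hmax
            refine ⟨fun i => if i < m then Z i else W,
              fun i => if i + 1 < m then p i else q, ?_, ?_, ?_, ?_⟩
            · intro i hi
              beta_reduce
              by_cases h : i < m
              · rw [if_pos h]; exact hZS i h
              · rw [if_neg h]; exact hWS.1
            · intro i hi j hj hEq
              simp only at hEq
              by_cases h1 : i < m <;> by_cases h2 : j < m
              · rw [if_pos h1, if_pos h2] at hEq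
                exact hZinj i h1 j h2 hEq
              · rw [if_pos h1, if_neg h2] at hEq
                exact absurd hEq (hWZ i h1)
              · rw [if_neg h1, if_pos h2] at hEq
                exact absurd hEq.symm (hWZ j h2)
              · omega
            · intro i hi j hj hEq
              simp only at hEq
              by_cases h1 : i + 1 < m <;> by_cases h2 : j + 1 < m
              · rw [if_pos h1, if_pos h2] at hEq
                exact hpinj i h1 j h2 hEq
              · rw [if_pos h1, if_neg h2] at hEq
                exact absurd hEq.symm (hq_is_p i h1)
              · rw [if_neg h1, if_pos h2] at hEq
                exact absurd hEq (hq_is_p j h2)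
              · omega
            · intro i hi
              beta_reduce
              by_cases h1 : i + 1 < m
              · rw [if_pos h1, if_pos (by omega : i < m), if_pos h1]
                exact hpmem i h1
              · have hieq : i = m - 1 := by omega
                rw [if_neg h1, if_pos (by omega : i < m), if_neg (by omega : ¬ i + 1 < m)]
                exact ⟨hieq ▸ hqZ, hqW⟩
      -- the leaf point
      set w := m - 1 with hw
      set pt := p (m - 2) with hpt
      have hptZw : pt ∈ Z w := by
        have := (hpmem (m - 2) (by omega)).2
        rwa [show m - 2 + 1 = m - 1 by omega] at this
      have hptZm2 : pt ∈ Z (m - 2) := (hpmem (m - 2) (by omega)).1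
      have hZm2ne : Z (m - 2) ≠ Z w := by
        intro h
        have := hZinj (m - 2) (by omega) w (by omega) h
        omega
      set S' := S \ {Z w} with hS'
      have hZm2S' : Z (m - 2) ∈ S' := ⟨hZS _ (by omega), hZm2ne⟩
      have hpEq : (⋃₀ S') ∩ Z w = {pt} := by
        apply subset_antisymm
        · rintro r ⟨hr1, hr2⟩
          exact hleaf r hr2 hr1
        · rintro r (rfl : r = pt)
          exact ⟨⟨Z (m - 2), hZm2S', hptZm2⟩, hptZw⟩
      have hS'fin : S'.Finite := hfin.subset diff_subset
      have hS'card : S'.ncard ≤ n := by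
        have := Set.ncard_diff_singleton_lt_of_mem hZwS hfin
        have h2 : S'.ncard = (S \ {Z w}).ncard := rfl
        omega
      have hS'ne : S'.Nonempty := ⟨Z (m - 2), hZm2S'⟩
      have hS'conn : ∀ A : Set (Set X), A ⊆ S' → A.Nonempty → (S' \ A).Nonempty →
          ((⋃₀ A) ∩ ⋃₀ (S' \ A)).Nonempty := by
        intro A hA hAne hA'ne
        have hWA : Z w ∉ A := fun h => (hA h).2 rfl
        have hSA : S \ A = insert (Z w) (S' \ A) := by
          ext T
          simp only [Set.mem_diff, Set.mem_insert_iff, Set.mem_singleton_iff, hS']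
          constructor
          · rintro ⟨hTS, hTA⟩
            by_cases h : T = Z w
            · exact Or.inl h
            · exact Or.inr ⟨⟨hTS, h⟩, hTA⟩
          · rintro (rfl | ⟨⟨hTS, _⟩, hTA⟩)
            · exact ⟨hZwS, hWA⟩
            · exact ⟨hTS, hTA⟩
        obtain ⟨r, hrA, hrB⟩ := hconn A (hA.trans diff_subset) hAne
          (by rw [hSA]; exact ⟨Z w, mem_insert _ _⟩)
        rw [hSA] at hrB
        obtain ⟨T, hT, hrT⟩ := hrB
        rcases hT with rfl | hT
        · -- r ∈ Z w, so r = pt ∈ ⋃₀ A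
          have hrS' : r ∈ ⋃₀ S' := by
            obtain ⟨T', hT', hrT'⟩ := hrA
            exact ⟨T', hA hT', hrT'⟩
          have hrpt : r = pt := by
            have : r ∈ ({pt} : Set X) := hpEq ▸ ⟨hrS', hrT⟩
            exact this
          have hptA : pt ∈ ⋃₀ A := hrpt ▸ hrA
          by_cases hZm2A : Z (m - 2) ∈ A
          · have hins : S \ insert (Z w) A = S' \ A := by
              ext T'
              simp only [Set.mem_diff, Set.mem_insert_iff, Set.mem_singleton_iff, hS']
              constructor
              · rintro ⟨hTS, hTA⟩
                push_neg at hTA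
                exact ⟨⟨hTS, hTA.1⟩, hTA.2⟩
              · rintro ⟨⟨hTS, hTne⟩, hTA⟩
                exact ⟨hTS, by push_neg; exact ⟨hTne, hTA⟩⟩
            obtain ⟨r₂, hr₂L, hr₂R⟩ := hconn (insert (Z w) A)
              (insert_subset hZwS (hA.trans diff_subset))
              ⟨Z w, mem_insert _ _⟩ (by rw [hins]; exact hA'ne)
            rw [hins] at hr₂R
            obtain ⟨T', hT', hr₂T'⟩ := hr₂L
            rcases hT' with rfl | hT'
            · -- r₂ ∈ Z w ∩ ⋃₀ (S' \ A), hence r₂ = pt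
              have hr₂S' : r₂ ∈ ⋃₀ S' := by
                obtain ⟨T'', hT'', hr''⟩ := hr₂R
                exact ⟨T'', hT''.1, hr''⟩
              have : r₂ = pt := by
                have : r₂ ∈ ({pt} : Set X) := hpEq ▸ ⟨hr₂S', hr₂T'⟩
                exact this
              exact ⟨pt, hptA, this ▸ hr₂R⟩
            · exact ⟨r₂, ⟨T', hT', hr₂T'⟩, hr₂R⟩
          · exact ⟨pt, hptA, Z (m - 2), ⟨hZm2S', hZm2A⟩, hptZm2⟩
        · exact ⟨r, hrA, T, hT, hrT⟩
      have hS'nc : ¬ NCycle S' := by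
        intro ⟨m', Z', p', h1, h2, h3, h4, h5, h6⟩
        exact hnc ⟨m', Z', p', h1, fun i hi => (h2 i hi).1, h3, h4, h5, h6⟩
      have hS'tree : FormsTree S' := ih S' hS'fin hS'card hS'ne hS'conn hS'nc
      have hfinal := FormsTree.insert (Z w) (fun h => h.2 rfl) hS'tree pt hpEq
      rwa [show Insert.insert (Z w) S' = S by
        rw [hS', Set.insert_diff_singleton, Set.insert_eq_self.mpr hZwS]] at hfinal


end Auxiliary

/-- Let `C` be a connected scheme of finite type over an algebraically
closed field `k`, of pure dimension one, with finitely many irreducible components.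
If `C` does not form a tree, then there exists a non-trivial cycle sequence whose
entries are pairwise distinct. -/
theorem exists_nontrivial_cycle_sequence_of_not_formsTree
    {k : Type u} [Field k] [IsAlgClosed k]
    (C : Scheme.{u}) (f : C ⟶ Spec (CommRingCat.of k))
    [LocallyOfFiniteType f] [QuasiCompact f]
    [ConnectedSpace C]
    (hfin : (irreducibleComponents C).Finite)
    (hdim : ∀ Z ∈ irreducibleComponents C, topologicalKrullDim Z = 1)
    (htree : ¬ FormsTree (irreducibleComponents C)) :
    ∃ l : List (Label C), IsCycleSeq l ∧ ¬ HasTrivialABReduction l ∧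
      l.Pairwise (· ≠ ·) := by
  classical
  obtain ⟨x⟩ : Nonempty C := inferInstance
  set S : Set (Set C) := irreducibleComponents C with hSdef
  have hne : S.Nonempty :=
    ⟨irreducibleComponent x, irreducibleComponent_mem_irreducibleComponents x⟩
  have hconn : ∀ A : Set (Set C), A ⊆ S → A.Nonempty → (S \ A).Nonempty →
      ((⋃₀ A) ∩ ⋃₀ (S \ A)).Nonempty := by
    intro A hA hAne hBne
    by_contra hEmp
    rw [Set.not_nonempty_iff_eq_empty] at hEmp
    have hUcl : IsClosed (⋃₀ A) := by
      rw [Set.sUnion_eq_biUnion]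
      exact (hfin.subset hA).isClosed_biUnion
        (fun Z hZ => isClosed_of_mem_irreducibleComponents _ (hA hZ))
    have hVcl : IsClosed (⋃₀ (S \ A)) := by
      rw [Set.sUnion_eq_biUnion]
      exact (hfin.subset Set.diff_subset).isClosed_biUnion
        (fun Z hZ => isClosed_of_mem_irreducibleComponents _ hZ.1)
    have hcov : (⋃₀ A) ∪ ⋃₀ (S \ A) = Set.univ := by
      rw [Set.eq_univ_iff_forall]
      intro y
      by_cases h : irreducibleComponent y ∈ A
      · exact Or.inl ⟨_, h, mem_irreducibleComponent⟩
      · exact Or.inr ⟨_, ⟨irreducibleComponent_mem_irreducibleComponents y, h⟩,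
          mem_irreducibleComponent⟩
    have hUopen : IsOpen (⋃₀ A) := by
      have : ⋃₀ A = (⋃₀ (S \ A))ᶜ := by
        apply subset_antisymm
        · intro z hz hz'
          exact absurd (Set.mem_inter hz hz') (by rw [hEmp]; exact Set.notMem_empty z)
        · intro z hz
          rcases (Set.eq_univ_iff_forall.mp hcov z).imp id id with h | h
          · exact h
          · exact absurd h hz
      rw [this]
      exact hVcl.isOpen_compl
    rcases isClopen_iff.mp ⟨hUcl, hUopen⟩ with h | h
    · obtain ⟨Z, hZA⟩ := hAne
      have hZne : Z.Nonempty := (hA hZA).1.1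
      obtain ⟨z, hz⟩ := hZne
      exact absurd (show z ∈ ⋃₀ A from ⟨Z, hZA, hz⟩) (by rw [h]; exact Set.notMem_empty z)
    · obtain ⟨Z, hZB⟩ := hBne
      have hZne : Z.Nonempty := hZB.1.1.1
      obtain ⟨z, hz⟩ := hZne
      have hzV : z ∈ ⋃₀ (S \ A) := ⟨Z, hZB, hz⟩
      have hzU : z ∈ ⋃₀ A := by rw [h]; trivial
      exact absurd (Set.mem_inter hzU hzV) (by rw [hEmp]; exact Set.notMem_empty z)
  have hNC : NCycle S := by
    by_contra h
    exact htree (formsTree_of_no_ncycle S.ncard S hfin le_rfl hne hconn h)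
  obtain ⟨m, Z, p, hm, hZS, hZinj, hpinj, hp1, hp2⟩ := hNC
  have hpcl : ∀ i < m, IsClosed ({p i} : Set C) := by
    intro i hi
    have hmlt : (i + 1) % m < m := Nat.mod_lt _ (by omega)
    have hne2 : (i + 1) % m ≠ i := by
      rcases Nat.lt_or_ge (i + 1) m with h | h
      · rw [Nat.mod_eq_of_lt h]; omega
      · rw [show i + 1 = m by omega, Nat.mod_self]; omega
    have hZne : Z i ≠ Z ((i + 1) % m) := fun h =>
      hne2 ((hZinj _ hi _ hmlt h) ▸ rfl)
    exact closed_singleton_of_mem_two (hZS i hi) (hZS _ hmlt) hZne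
      (hdim _ (hZS i hi)) (hp1 i hi) (hp2 i hi)
  exact cycle_list hm Z p hZS hpcl hZinj hpinj hp1 hp2
end

section
/- Let k be an algebraically closed field and let C be a connected scheme of finite type over k of pure dimension one, with irreducible decomposition C = C₁ ∪ ⋯ ∪ C_ℓ. If C does not form a tree, then there exist k ≥ 2 pairwise distinct irreducible components B₁, …, B_k of C such that for every 1 ≤ i ≤ k, the set B_i ∩ (⋃_{j≠i} B_j) contains at least two points. -/
/-!
Statement 1: if a connected pure one-dimensional scheme of finite type over an
algebraically closed field does not form a tree, then there are at least two pairwise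
distinct irreducible components each of which meets the union of the others in at
least two points.
-/

open AlgebraicGeometry

universe u

lemma my_aux {X : Type*} [TopologicalSpace X] {A B : Set X} {p : X}
    (hAB : IsPreconnected (A ∪ B)) (hA : IsClosed A) (hB : IsClosed B)
    (hpA : p ∈ A) (hI : A ∩ B ⊆ {p})
    {t u : Set X} (ht : IsClosed t) (hu : IsClosed u) (hcov : A ⊆ t ∪ u)
    (hpt : p ∈ t) (hx : (A ∩ t).Nonempty) (hy : (A ∩ u).Nonempty) :
    (A ∩ (t ∩ u)).Nonempty := by
  obtain ⟨z, hzAB, hzt', hzu'⟩ := isPreconnected_closed_iff.mp hAB ((A ∩ t) ∪ B) (A ∩ u)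
    ((hA.inter ht).union hB) (hA.inter hu)
    (by
      rintro a (haA | haB)
      · rcases hcov haA with h | h
        · exact Or.inl (Or.inl ⟨haA, h⟩)
        · exact Or.inr ⟨haA, h⟩
      · exact Or.inl (Or.inr haB))
    ⟨hx.choose, Or.inl hx.choose_spec.1, Or.inl hx.choose_spec⟩
    ⟨hy.choose, Or.inl hy.choose_spec.1, hy.choose_spec⟩
  rcases hzt' with hzt | hzB
  · exact ⟨z, hzt.1, hzt.2, hzu'.2⟩
  · have : z = p := hI ⟨hzu'.1, hzB⟩
    subst this
    exact ⟨z, hzu'.1, hpt, hzu'.2⟩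

lemma my_isPreconnected_of_union {X : Type*} [TopologicalSpace X] {A B : Set X} {p : X}
    (hAB : IsPreconnected (A ∪ B)) (hA : IsClosed A) (hB : IsClosed B)
    (hpA : p ∈ A) (hI : A ∩ B ⊆ {p}) :
    IsPreconnected A := by
  rw [isPreconnected_closed_iff]
  intro t u ht hu hcov hx hy
  rcases hcov hpA with hpt | hpu
  · exact my_aux hAB hA hB hpA hI ht hu hcov hpt hx hy
  · have := my_aux hAB hA hB hpA hI hu ht (by rwa [Set.union_comm]) hpu hy hx
    rwa [Set.inter_comm u t] at this

/-- Main combinatorial lemma. -/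
lemma my_formsTree {X : Type*} [TopologicalSpace X] :
    ∀ (n : ℕ) (T : Set (Set X)), T.Finite → T.ncard = n → T.Nonempty →
    (∀ Z ∈ T, IsClosed Z) → (∀ Z ∈ T, Z.Nonempty) → IsPreconnected (⋃₀ T) →
    (∀ S ⊆ T, 2 ≤ S.ncard → ∃ Z ∈ S, (Z ∩ ⋃₀ (S \ {Z})).Subsingleton) →
    FormsTree T := by
  intro n
  induction n using Nat.strong_induction_on with
  | _ n ih =>
    intro T hfin hcard hne hcl hnon hconn h
    rcases Nat.lt_or_ge n 2 with hn | hn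
    · -- n ≤ 1, and T nonempty so n = 1
      have hpos := (Set.ncard_pos hfin).mpr hne
      have h1 : T.ncard = 1 := by omega
      obtain ⟨Z, rfl⟩ := Set.ncard_eq_one.mp h1
      exact FormsTree.single Z
    · obtain ⟨Z, hZT, hsub⟩ := h T subset_rfl (hcard ▸ hn)
      set T' : Set (Set X) := T \ {Z} with hT'
      have hT'fin : T'.Finite := hfin.diff
      have hT'card : T'.ncard = n - 1 := by
        rw [hT', Set.ncard_diff_singleton_of_mem hZT, hcard]
      have hT'ne : T'.Nonempty := by
        rw [← Set.ncard_pos hT'fin]; omega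
      have hrestcl : IsClosed (⋃₀ T') := by
        rw [Set.sUnion_eq_biUnion]
        exact hT'fin.isClosed_biUnion fun s hs => hcl s hs.1
      have hZcl : IsClosed Z := hcl Z hZT
      have hunion : ⋃₀ T = (⋃₀ T') ∪ Z := by
        have : T = Insert.insert Z T' := by
          rw [hT', Set.insert_diff_singleton, Set.insert_eq_of_mem hZT]
        rw [this, Set.sUnion_insert, Set.union_comm]
      -- the intersection is nonempty
      have hconn' : IsPreconnected ((⋃₀ T') ∪ Z) := hunion ▸ hconn
      obtain ⟨q, _, hq⟩ := isPreconnected_closed_iff.mp hconn' (⋃₀ T') Z hrestcl hZcl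
        (le_refl _)
        (by
          obtain ⟨W, hW⟩ := hT'ne
          obtain ⟨w, hw⟩ := hnon W hW.1
          exact ⟨w, Or.inl ⟨W, hW, hw⟩, ⟨W, hW, hw⟩⟩)
        (by
          obtain ⟨z, hz⟩ := hnon Z hZT
          exact ⟨z, Or.inr hz, hz⟩)
      have hsingle : (⋃₀ T') ∩ Z = {q} := by
        apply Set.eq_singleton_iff_unique_mem.mpr
        refine ⟨hq, fun y hy => ?_⟩
        exact hsub ⟨hy.2, hy.1⟩ ⟨hq.2, hq.1⟩
      have hrestconn : IsPreconnected (⋃₀ T') :=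
        my_isPreconnected_of_union hconn' hrestcl hZcl hq.1 (le_of_eq hsingle)
      have htree' : FormsTree T' := by
        refine ih (n-1) (by omega) T' hT'fin hT'card hT'ne
          (fun W hW => hcl W hW.1) (fun W hW => hnon W hW.1) hrestconn
          (fun S hS h2 => h S (hS.trans Set.diff_subset) h2)
      have : FormsTree (Insert.insert Z T') :=
        FormsTree.insert Z (fun hmem => hmem.2 rfl) htree' q hsingle
      rwa [hT', Set.insert_diff_singleton, Set.insert_eq_of_mem hZT] at this

/-- Let `C` be a connected scheme of finite type over an algebraically
closed field `k`, of pure dimension one, with finitely many irreducible components.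
If `C` does not form a tree, then there exists a finite collection `S` of at least two
(pairwise distinct) irreducible components of `C` such that every member `Z` of `S`
meets the union of the other members of `S` in at least two points. -/
theorem exists_components_meeting_in_two_points_of_not_formsTree
    {k : Type u} [Field k] [IsAlgClosed k]
    (C : Scheme.{u}) (f : C ⟶ Spec (CommRingCat.of k))
    [LocallyOfFiniteType f] [QuasiCompact f]
    [ConnectedSpace C]
    (hfin : (irreducibleComponents C).Finite)
    (hdim : ∀ Z ∈ irreducibleComponents C, topologicalKrullDim Z = 1)
    (htree : ¬ FormsTree (irreducibleComponents C)) :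
    ∃ S : Set (Set C), S ⊆ irreducibleComponents C ∧ S.Finite ∧ 2 ≤ S.ncard ∧
      ∀ Z ∈ S, (Z ∩ ⋃₀ (S \ {Z})).Nontrivial := by
  by_contra hcon
  push_neg at hcon
  apply htree
  have hcover : ⋃₀ (irreducibleComponents C) = Set.univ := by
    apply Set.eq_univ_of_forall
    intro x
    exact ⟨irreducibleComponent x, irreducibleComponent_mem_irreducibleComponents x,
      mem_irreducibleComponent⟩
  have hne : (irreducibleComponents C).Nonempty := by
    have : Nonempty C := inferInstance
    obtain ⟨x⟩ := this
    exact ⟨irreducibleComponent x, irreducibleComponent_mem_irreducibleComponents x⟩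
  refine my_formsTree (irreducibleComponents C).ncard (irreducibleComponents C) hfin rfl hne
    (fun Z hZ => isClosed_of_mem_irreducibleComponents Z hZ)
    (fun Z hZ => hZ.1.1) (by rw [hcover]; exact isPreconnected_univ)
    (fun S hS h2 => ?_)
  obtain ⟨Z, hZS, hZ⟩ := hcon S hS (hfin.subset hS) h2
  exact ⟨Z, hZS, hZ⟩
end

section
/- Let T be a nonempty contractible, locally path-connected topological space, and let U, V ⊆ T be open subsets with T = U ∪ V such that V is nonempty and connected. Then for every connected component U' of U, the intersection U' ∩ V is nonempty and connected. -/
/-!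
Statement 2 (topological content of Proposition 4.2(2) of the paper):
in a nonempty contractible locally path-connected space covered by two open sets `U`
and `V` with `V` nonempty and connected, every connected component of `U` meets `V`
in a nonempty connected set.

The proof of connectedness is by contradiction, via an explicit `ZMod 2`-valued
monodromy (Čech cocycle) argument: a separation `A ∪ B` of a component's
intersection with `V` yields a loop (a path in the component followed by a path in
`V`) whose `ZMod 2` monodromy with respect to the separating set `B` is `1`; a
null-homotopy of this loop (available since the space is contractible, hence simply
connected) is subdivided, via a Lebesgue number, into small squares each mapped into
`U` or `V`, and a discrete Stokes argument shows the monodromy must be `0`.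
-/

open Set

/-- The `ZMod 2` cocycle identity around a grid cell. -/
private lemma key_bool_identity (x y z w : Bool) (k : ZMod 2) :
    (if x = y then (0 : ZMod 2) else 1) * k + (if y = w then (0 : ZMod 2) else 1) * k =
      (if x = z then (0 : ZMod 2) else 1) * k + (if z = w then (0 : ZMod 2) else 1) * k := by
  have h2 : ∀ u : ZMod 2, u + u = 0 := by decide
  cases x <;> cases y <;> cases z <;> cases w <;> simp [h2]

private lemma grid_lemma (m : ℕ) (cr cu : ℕ → ℕ → ZMod 2)
    (hcell : ∀ i j, i + 1 < m + 1 → j + 1 < m + 1 →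
      cr i j + cu (i + 1) j = cu i j + cr i (j + 1))
    (hcr0 : ∀ k, cr k 0 = 0)
    (hcum : ∀ l, l + 1 < m + 1 → cu m l = 0)
    (hcrtop : ∀ i, i + 1 < m + 1 → cr i m = 0) :
    ∑ l ∈ Finset.range m, cu 0 l = 0 := by
  set Sig : ℕ → ℕ → ZMod 2 :=
    fun i j => (∑ k ∈ Finset.range i, cr k 0) + ∑ l ∈ Finset.range j, cu i l with hSig
  have hSigup : ∀ i j, Sig i (j + 1) = Sig i j + cu i j := by
    intro i j; simp [hSig, Finset.sum_range_succ, add_assoc]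
  have hSigrt : ∀ j, j < m + 1 → ∀ i, i + 1 < m + 1 → Sig (i + 1) j = Sig i j + cr i j := by
    intro j
    induction j with
    | zero =>
      intro _ i hi
      simp [hSig, Finset.sum_range_succ]
    | succ j ih =>
      intro hj i hi
      have hj' : j < m + 1 := Nat.lt_of_succ_lt hj
      rw [hSigup, hSigup, ih hj' i hi, add_assoc, hcell i j hi hj, ← add_assoc]
  have hSigbot : ∀ i, Sig i 0 = 0 := by
    intro i
    simp only [hSig, Finset.range_zero, Finset.sum_empty, add_zero]
    exact Finset.sum_eq_zero fun k _ => hcr0 k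
  have hSigright : Sig m m = 0 := by
    simp only [hSig]
    rw [Finset.sum_eq_zero fun k _ => hcr0 k,
      Finset.sum_eq_zero fun l hl => hcum l (by simpa using Nat.succ_lt_succ (Finset.mem_range.mp hl)),
      add_zero]
  have htop : ∀ i, i ≤ m → Sig i m = Sig 0 m := by
    intro i
    induction i with
    | zero => intro _; rfl
    | succ i ih =>
      intro h
      rw [hSigrt m (Nat.lt_succ_self m) i (Nat.succ_lt_succ h), ih (Nat.le_of_succ_le h),
        hcrtop i (Nat.succ_lt_succ h), add_zero]
  have h0m : Sig 0 m = ∑ l ∈ Finset.range m, cu 0 l := by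
    simp [hSig]
  rw [← h0m, ← htop m le_rfl, hSigright]

open Classical in
private lemma oneD {T : Type*} [TopologicalSpace T] {U V U' A B : Set T}
    (hA : IsOpen A) (hB : IsOpen B) (hUVB : IsOpen ((U ∩ V) \ B))
    (hU'U : U' ⊆ U) (hcov : U' ∩ V = A ∪ B) (hdisj : Disjoint A B)
    {a b : T} (ha : a ∈ A) (hb : b ∈ B)
    (p : Path a b) (hp : ∀ t, p t ∈ U') (q : Path b a) (hq : ∀ t, q t ∈ V)
    (m : ℕ) (lab : ℕ → Bool)
    (hlab : ∀ j, j < m + 1 → ∀ t ∈ Set.Icc ((j : ℝ) / ((m : ℝ) + 1)) (((j : ℝ) + 1) / ((m : ℝ) + 1)),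
      (p.trans q).extend t ∈ (if lab j then U else V)) :
    ∑ l ∈ Finset.range m, (if lab l = lab (l + 1) then (0 : ZMod 2) else 1) *
      (if (p.trans q).extend (((l : ℝ) + 1) / ((m : ℝ) + 1)) ∈ B then (1 : ZMod 2) else 0) = 1 := by
  classical
  set N : ℝ := (m : ℝ) + 1 with hN
  have hNpos : (0 : ℝ) < N := by positivity
  set f : ℝ → T := ⇑(p.trans q).extend with hf
  have hfc : Continuous f := (p.trans q).continuous_extend
  set κ : ℝ → ZMod 2 := fun t => if f t ∈ B then 1 else 0 with hκ
  have hanB : a ∉ B := fun h => Set.disjoint_left.mp hdisj ha h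
  have hbnA : b ∉ A := fun h => Set.disjoint_left.mp hdisj h hb
  have hbV : b ∈ V := by
    have : b ∈ U' ∩ V := by rw [hcov]; exact Or.inr hb
    exact this.2
  -- values of `f` on the two halves
  have hproj : ∀ t : ℝ, f t = (p.trans q) (Set.projIcc 0 1 zero_le_one t) := fun t => rfl
  have hcoe : ∀ t : ℝ, ((Set.projIcc 0 1 zero_le_one t : unitInterval) : ℝ) = max 0 (min 1 t) :=
    fun t => Set.coe_projIcc 0 1 zero_le_one t
  have half1 : ∀ t : ℝ, t ≤ 2⁻¹ → f t ∈ U' := by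
    intro t ht
    rw [hproj, Path.trans_apply]
    have hu : ((Set.projIcc 0 1 zero_le_one t : unitInterval) : ℝ) ≤ 1 / 2 := by
      rw [hcoe]
      apply max_le (by norm_num)
      exact le_trans (min_le_right _ _) (by norm_num [ht]; linarith)
    rw [dif_pos hu]
    exact hp _
  have ptop : ∀ u : unitInterval, (u : ℝ) = 1 → p u = b := by
    intro u h1
    have : u = 1 := Subtype.ext h1
    rw [this]; exact p.target
  have half2 : ∀ t : ℝ, 2⁻¹ ≤ t → f t ∈ V := by
    intro t ht
    rw [hproj, Path.trans_apply]
    by_cases hu : ((Set.projIcc 0 1 zero_le_one t : unitInterval) : ℝ) ≤ 1 / 2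
    · rw [dif_pos hu]
      have hge : (1 : ℝ) / 2 ≤ ((Set.projIcc 0 1 zero_le_one t : unitInterval) : ℝ) := by
        rw [hcoe]
        refine le_trans ?_ (le_max_right _ _)
        refine le_min (by norm_num) (by linarith)
      rw [ptop _ (by
        show 2 * ((Set.projIcc 0 1 zero_le_one t : unitInterval) : ℝ) = 1
        rw [le_antisymm hu hge]; norm_num)]
      exact hbV
    · rw [dif_neg hu]
      exact hq _
  have hbhalf : f 2⁻¹ = b := by
    rw [hproj, Path.trans_apply]
    have hcoeh : ((Set.projIcc 0 1 zero_le_one 2⁻¹ : unitInterval) : ℝ) = 2⁻¹ := by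
      rw [hcoe]; norm_num
    rw [dif_pos (by rw [hcoeh]; norm_num)]
    exact ptop _ (by
      show 2 * ((Set.projIcc 0 1 zero_le_one 2⁻¹ : unitInterval) : ℝ) = 1
      rw [hcoeh]; norm_num)
  -- the index functions
  set idx : Bool → ℝ → ZMod 2 := fun c t =>
    if c then (if t ≤ 2⁻¹ then 0 else 1 + κ t) else (if t ≤ 2⁻¹ then κ t else 1) with hidx
  have h2 : ∀ u : ZMod 2, u + u = 0 := by decide
  have hchart : ∀ (c c' : Bool) (t : ℝ),
      idx c' t = idx c t + (if c = c' then (0 : ZMod 2) else 1) * κ t := by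
    intro c c' t
    cases c <;> cases c' <;> by_cases ht : t ≤ 2⁻¹ <;>
      simp [hidx, ht, h2, add_assoc]
  -- constancy along monochromatic segments
  have hconst : ∀ (c : Bool) (r s : ℝ), r ≤ s →
      (∀ t ∈ Set.Icc r s, f t ∈ (if c then U else V)) → idx c r = idx c s := by
    intro c r s hrs hmem
    have hrmem : r ∈ Set.Icc r s := ⟨le_rfl, hrs⟩
    have hsmem : s ∈ Set.Icc r s := ⟨hrs, le_rfl⟩
    cases c
    · -- the segment is mapped into V
      have hmem' : ∀ t ∈ Set.Icc r s, f t ∈ V := by simpa using hmem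
      have hZ1o : IsOpen (Set.Iio (2⁻¹ : ℝ) ∩ f ⁻¹' A) := isOpen_Iio.inter (hA.preimage hfc)
      have hZ2o : IsOpen (Set.Ioi (2⁻¹ : ℝ) ∪ f ⁻¹' B) := isOpen_Ioi.union (hB.preimage hfc)
      have hdisjZ : Disjoint (Set.Iio (2⁻¹ : ℝ) ∩ f ⁻¹' A) (Set.Ioi (2⁻¹ : ℝ) ∪ f ⁻¹' B) := by
        rw [Set.disjoint_left]
        rintro t ⟨ht1, ht2⟩ (h | h)
        · exact lt_asymm ht1 (Set.mem_Ioi.mp h)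
        · exact Set.disjoint_left.mp hdisj ht2 h
      have hcover : Set.Icc r s ⊆ (Set.Iio (2⁻¹ : ℝ) ∩ f ⁻¹' A) ∪ (Set.Ioi (2⁻¹ : ℝ) ∪ f ⁻¹' B) := by
        intro t ht
        by_cases hlf : t ≤ 2⁻¹
        · have hU'm : f t ∈ U' := half1 t hlf
          have : f t ∈ A ∪ B := by rw [← hcov]; exact ⟨hU'm, hmem' t ht⟩
          rcases this with hA' | hB'
          · left
            refine ⟨?_, hA'⟩
            rcases lt_or_eq_of_le hlf with h | h
            · exact h
            · exfalso; rw [h, hbhalf] at hA'; exact hbnA hA'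
          · right; right; exact hB'
        · right; left; exact lt_of_not_ge hlf
      rcases isPreconnected_Icc.subset_or_subset hZ1o hZ2o hdisjZ hcover with hsub | hsub
      · have hv : ∀ t ∈ Set.Icc r s, idx false t = 0 := by
          intro t ht
          obtain ⟨ht1, ht2⟩ := hsub ht
          have ht1' : t < 2⁻¹ := ht1
          have hnB : f t ∉ B := fun h => Set.disjoint_left.mp hdisj ht2 h
          simp [hidx, le_of_lt ht1', hκ, hnB]
        rw [hv r hrmem, hv s hsmem]
      · have hv : ∀ t ∈ Set.Icc r s, idx false t = 1 := by
          intro t ht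
          rcases hsub ht with h | h
          · have h' : (2⁻¹ : ℝ) < t := h
            simp [hidx, not_le.mpr h']
          · have h' : f t ∈ B := h
            by_cases hlf : t ≤ 2⁻¹ <;> simp [hidx, hlf, hκ, h']
        rw [hv r hrmem, hv s hsmem]
    · -- the segment is mapped into U
      have hmem' : ∀ t ∈ Set.Icc r s, f t ∈ U := by simpa using hmem
      have hZ1o : IsOpen (Set.Iio (2⁻¹ : ℝ) ∪ f ⁻¹' B) := isOpen_Iio.union (hB.preimage hfc)
      have hZ2o : IsOpen (Set.Ioi (2⁻¹ : ℝ) ∩ f ⁻¹' ((U ∩ V) \ B)) :=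
        isOpen_Ioi.inter (hUVB.preimage hfc)
      have hdisjZ : Disjoint (Set.Iio (2⁻¹ : ℝ) ∪ f ⁻¹' B)
          (Set.Ioi (2⁻¹ : ℝ) ∩ f ⁻¹' ((U ∩ V) \ B)) := by
        rw [Set.disjoint_left]
        rintro t (h | h) ⟨ht1, ht2⟩
        · exact lt_asymm h (Set.mem_Ioi.mp ht1)
        · exact ht2.2 h
      have hcover : Set.Icc r s ⊆ (Set.Iio (2⁻¹ : ℝ) ∪ f ⁻¹' B) ∪
          (Set.Ioi (2⁻¹ : ℝ) ∩ f ⁻¹' ((U ∩ V) \ B)) := by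
        intro t ht
        by_cases hlf : t ≤ 2⁻¹
        · rcases lt_or_eq_of_le hlf with h | h
          · left; left; exact h
          · left; right; rw [Set.mem_preimage, h, hbhalf]; exact hb
        · have hVt : f t ∈ V := half2 t (le_of_lt (lt_of_not_ge hlf))
          by_cases hBt : f t ∈ B
          · left; right; exact hBt
          · right
            exact ⟨lt_of_not_ge hlf, ⟨⟨hmem' t ht, hVt⟩, hBt⟩⟩
      rcases isPreconnected_Icc.subset_or_subset hZ1o hZ2o hdisjZ hcover with hsub | hsub
      · have hv : ∀ t ∈ Set.Icc r s, idx true t = 0 := by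
          intro t ht
          rcases hsub ht with h | h
          · have h' : t < 2⁻¹ := h
            simp [hidx, le_of_lt h']
          · have h' : f t ∈ B := h
            by_cases hlf : t ≤ 2⁻¹ <;>
              simp [hidx, hlf, hκ, h', show (1 : ZMod 2) + 1 = 0 by decide]
        rw [hv r hrmem, hv s hsmem]
      · have hv : ∀ t ∈ Set.Icc r s, idx true t = 1 := by
          intro t ht
          obtain ⟨ht1, ht2⟩ := hsub ht
          have ht1' : (2⁻¹ : ℝ) < t := ht1
          simp [hidx, not_le.mpr ht1', hκ, ht2.2]
        rw [hv r hrmem, hv s hsmem]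
  -- the inductive computation of the partial monodromy sums
  set ss : ℕ → ZMod 2 := fun j => ∑ l ∈ Finset.range j,
    (if lab l = lab (l + 1) then (0 : ZMod 2) else 1) * κ (((l : ℝ) + 1) / N) with hss
  have claim : ∀ j, j ≤ m → ss j = idx (lab j) ((j : ℝ) / N) := by
    intro j
    induction j with
    | zero =>
      intro _
      have hf0 : f 0 = a := by
        rw [hf]; exact Path.extend_zero _
      have hκ0 : κ 0 = 0 := by simp [hκ, hf0, hanB]
      have h0 : ((0 : ℕ) : ℝ) / N = 0 := by norm_num
      rw [h0]
      cases hl : lab 0 <;> simp [hss, hidx, hκ0, show (0:ℝ) ≤ 2⁻¹ by norm_num]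
    | succ j ih =>
      intro hj1
      have hj : j ≤ m := Nat.le_of_succ_le hj1
      have hlt : j < m + 1 := Nat.lt_succ_of_le hj
      have hle : (j : ℝ) / N ≤ ((j : ℝ) + 1) / N := by gcongr; linarith
      have hconstj := hconst (lab j) ((j : ℝ) / N) (((j : ℝ) + 1) / N) hle (hlab j hlt)
      have hcast : (((j + 1 : ℕ)) : ℝ) = (j : ℝ) + 1 := by push_cast; ring
      calc ss (j + 1)
          = ss j + (if lab j = lab (j + 1) then (0 : ZMod 2) else 1) * κ (((j : ℝ) + 1) / N) := by
            simp [hss, Finset.sum_range_succ]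
        _ = idx (lab j) (((j : ℝ) + 1) / N)
              + (if lab j = lab (j + 1) then (0 : ZMod 2) else 1) * κ (((j : ℝ) + 1) / N) := by
            rw [ih hj, hconstj]
        _ = idx (lab (j + 1)) (((j : ℝ) + 1) / N) := (hchart (lab j) (lab (j + 1)) _).symm
        _ = idx (lab (j + 1)) (((j + 1 : ℕ) : ℝ) / N) := by rw [hcast]
  have hfin := claim m le_rfl
  have h1N : ((m : ℝ) + 1) / N = 1 := div_self hNpos.ne'
  have hlast : idx (lab m) ((m : ℝ) / N) = idx (lab m) 1 := by
    have := hconst (lab m) ((m : ℝ) / N) (((m : ℝ) + 1) / N) (by gcongr; linarith)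
      (hlab m (Nat.lt_succ_self m))
    rwa [h1N] at this
  have hone : idx (lab m) 1 = 1 := by
    have h12 : ¬((1 : ℝ) ≤ 2⁻¹) := by norm_num
    have hf1 : f 1 = a := by rw [hf]; exact Path.extend_one _
    have hκ1 : κ 1 = 0 := by simp [hκ, hf1, hanB]
    cases hl : lab m <;> simp [hidx, h12, hκ1]
  have : ss m = 1 := by rw [hfin, hlast, hone]
  simpa [hss, hκ, hf, hN] using this

private lemma no_homotopy {T : Type*} [TopologicalSpace T] {U V U' A B : Set T}
    (hU : IsOpen U) (hV : IsOpen V) (hA : IsOpen A) (hB : IsOpen B)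
    (hUVB : IsOpen ((U ∩ V) \ B))
    (hU'U : U' ⊆ U) (hcov : U' ∩ V = A ∪ B) (hdisj : Disjoint A B)
    (hTcov : U ∪ V = Set.univ)
    {a b : T} (ha : a ∈ A) (hb : b ∈ B)
    (p : Path a b) (hp : ∀ t, p t ∈ U') (q : Path b a) (hq : ∀ t, q t ∈ V)
    (F : Path.Homotopy (p.trans q) (Path.refl a)) : False := by
  classical
  have hanB : a ∉ B := fun h => Set.disjoint_left.mp hdisj ha h
  -- the continuous extension of the homotopy to the real plane
  set G : ℝ × ℝ → T :=
    fun z => F (Set.projIcc 0 1 zero_le_one z.1, Set.projIcc 0 1 zero_le_one z.2) with hG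
  have hGcont : Continuous G :=
    F.continuous.comp ((continuous_projIcc.comp continuous_fst).prodMk
      (continuous_projIcc.comp continuous_snd))
  have hproj0 : Set.projIcc (0:ℝ) 1 zero_le_one 0 = 0 := by
    apply Subtype.ext; rw [Set.coe_projIcc]; norm_num
  have hproj1 : Set.projIcc (0:ℝ) 1 zero_le_one 1 = 1 := by
    apply Subtype.ext; rw [Set.coe_projIcc]; norm_num
  -- boundary values
  have hG0 : ∀ t : ℝ, G (0, t) = (p.trans q).extend t := by
    intro t
    show F (Set.projIcc 0 1 zero_le_one 0, Set.projIcc 0 1 zero_le_one t) = _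
    rw [hproj0]
    exact F.apply_zero _
  have hG1 : ∀ t : ℝ, G (1, t) = a := by
    intro t
    show F (Set.projIcc 0 1 zero_le_one 1, Set.projIcc 0 1 zero_le_one t) = _
    rw [hproj1, F.apply_one]
    rfl
  have hGs0 : ∀ s : ℝ, G (s, 0) = a := by
    intro s
    show F (Set.projIcc 0 1 zero_le_one s, Set.projIcc 0 1 zero_le_one 0) = _
    rw [hproj0]
    exact F.source _
  have hGs1 : ∀ s : ℝ, G (s, 1) = a := by
    intro s
    show F (Set.projIcc 0 1 zero_le_one s, Set.projIcc 0 1 zero_le_one 1) = _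
    rw [hproj1]
    exact F.target _
  -- the two open preimages cover the plane
  set P : Set (ℝ × ℝ) := G ⁻¹' U with hP
  set Q : Set (ℝ × ℝ) := G ⁻¹' V with hQ
  have hPo : IsOpen P := hU.preimage hGcont
  have hQo : IsOpen Q := hV.preimage hGcont
  have hPQ : ∀ z : ℝ × ℝ, z ∈ P ∪ Q := by
    intro z
    have : G z ∈ U ∪ V := by rw [hTcov]; trivial
    exact this
  -- Lebesgue number for the unit square
  have hK : IsCompact (Set.Icc (0:ℝ) 1 ×ˢ Set.Icc (0:ℝ) 1) := isCompact_Icc.prod isCompact_Icc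
  obtain ⟨δ, hδpos, hδ⟩ := lebesgue_number_lemma_of_metric hK
    (c := fun bb : Bool => if bb then P else Q)
    (fun bb => by cases bb <;> simp [hPo, hQo])
    (by
      intro z _
      rcases hPQ z with h | h
      · exact Set.mem_iUnion.mpr ⟨true, by simpa using h⟩
      · exact Set.mem_iUnion.mpr ⟨false, by simpa using h⟩)
  -- choose the mesh size
  obtain ⟨m0, hm0⟩ := exists_nat_gt (1 / δ)
  set N : ℝ := (m0 : ℝ) + 1 with hNdef
  have hNpos : (0 : ℝ) < N := by positivity
  have hNδ : 1 / N < δ := by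
    rw [div_lt_iff₀ hNpos]
    have h1 : 1 < N * δ := by
      have : 1 / δ < N := lt_trans hm0 (by rw [hNdef]; linarith)
      calc (1:ℝ) = (1/δ) * δ := by field_simp
        _ < N * δ := by apply mul_lt_mul_of_pos_right this hδpos
    linarith [h1]
  set m := m0 with hm
  -- the grid of closed squares
  set Sq : ℕ → ℕ → Set (ℝ × ℝ) := fun i j =>
    Set.Icc ((i : ℝ) / N) (((i : ℝ) + 1) / N) ×ˢ Set.Icc ((j : ℝ) / N) (((j : ℝ) + 1) / N)
    with hSq
  have hSqsub : ∀ i j : ℕ, i < m + 1 → j < m + 1 → Sq i j ⊆ P ∨ Sq i j ⊆ Q := by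
    intro i j hi hj
    have hziK : ((i : ℝ) / N, (j : ℝ) / N) ∈ Set.Icc (0:ℝ) 1 ×ˢ Set.Icc (0:ℝ) 1 := by
      constructor <;> constructor
      · positivity
      · rw [div_le_one hNpos]
        have : (i : ℝ) ≤ (m : ℝ) + 1 := by exact_mod_cast Nat.le_of_lt_succ hi |>.trans (Nat.le_succ m)
        linarith [this]
      · positivity
      · rw [div_le_one hNpos]
        have : (j : ℝ) ≤ (m : ℝ) + 1 := by exact_mod_cast Nat.le_of_lt_succ hj |>.trans (Nat.le_succ m)
        linarith [this]
    obtain ⟨bb, hball⟩ := hδ _ hziK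
    have hsubball : Sq i j ⊆ Metric.ball ((i : ℝ) / N, (j : ℝ) / N) δ := by
      rintro w ⟨⟨hw1, hw2⟩, ⟨hw3, hw4⟩⟩
      rw [Metric.mem_ball, Prod.dist_eq]
      have hdiv : ((i : ℝ) + 1) / N = (i : ℝ) / N + 1 / N := by ring
      have hdiv' : ((j : ℝ) + 1) / N = (j : ℝ) / N + 1 / N := by ring
      apply max_lt
      · rw [Real.dist_eq, abs_lt]
        constructor <;> [linarith [hw1, hδpos, hNδ, one_div_pos.mpr hNpos]; skip]
        rw [hdiv] at hw2
        linarith [hw2, hNδ]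
      · rw [Real.dist_eq, abs_lt]
        constructor <;> [linarith [hw3, hδpos, hNδ, one_div_pos.mpr hNpos]; skip]
        rw [hdiv'] at hw4
        linarith [hw4, hNδ]
    cases bb
    · right; intro w hw; simpa using hball (hsubball hw)
    · left; intro w hw; simpa using hball (hsubball hw)
  -- labels
  set L : ℕ → ℕ → Bool := fun i j => if Sq i j ⊆ P then true else false with hL
  have hLmem : ∀ i j : ℕ, i < m + 1 → j < m + 1 → Sq i j ⊆ (if L i j then P else Q) := by
    intro i j hi hj
    by_cases h : Sq i j ⊆ P
    · simp [hL, h]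
    · simp [hL, h]
      exact (hSqsub i j hi hj).resolve_left h
  -- the B-indicator
  set κ2 : ℝ × ℝ → ZMod 2 := fun z => if G z ∈ B then 1 else 0 with hκ2
  have hκconst : ∀ s : Set (ℝ × ℝ), IsPreconnected s → s ⊆ P → s ⊆ Q →
      ∀ z ∈ s, ∀ w ∈ s, κ2 z = κ2 w := by
    intro s hs hsP hsQ z hz w hw
    have hdisjBV : Disjoint (G ⁻¹' B) (G ⁻¹' ((U ∩ V) \ B)) := by
      rw [Set.disjoint_left]
      intro y hy1 hy2
      exact hy2.2 hy1
    have hcover : s ⊆ G ⁻¹' B ∪ G ⁻¹' ((U ∩ V) \ B) := by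
      intro y hy
      by_cases h : G y ∈ B
      · exact Or.inl h
      · exact Or.inr ⟨⟨hsP hy, hsQ hy⟩, h⟩
    rcases hs.subset_or_subset (hB.preimage hGcont) (hUVB.preimage hGcont) hdisjBV hcover
      with hsub | hsub
    · have h1 : G z ∈ B := hsub hz
      have h2 : G w ∈ B := hsub hw
      simp [hκ2, h1, h2]
    · have h1 : G z ∉ B := (hsub hz).2
      have h2 : G w ∉ B := (hsub hw).2
      simp [hκ2, h1, h2]
  -- the transition coefficients
  set cr : ℕ → ℕ → ZMod 2 := fun i j =>
    (if L i j = L (i + 1) j then 0 else 1) * κ2 (((i : ℝ) + 1) / N, (j : ℝ) / N) with hcr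
  set cu : ℕ → ℕ → ZMod 2 := fun i j =>
    (if L i j = L i (j + 1) then 0 else 1) * κ2 ((i : ℝ) / N, ((j : ℝ) + 1) / N) with hcu
  have hstepR : ∀ i : ℕ, (i : ℝ) / N ≤ ((i : ℝ) + 1) / N := by
    intro i; gcongr; linarith
  -- evaluation of `cr` at an arbitrary point of the separating edge
  have hedgeR : ∀ i j : ℕ, i + 1 < m + 1 → j < m + 1 →
      ∀ w ∈ ({(((i : ℝ) + 1) / N)} ×ˢ Set.Icc ((j : ℝ) / N) (((j : ℝ) + 1) / N) : Set (ℝ × ℝ)),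
      cr i j = (if L i j = L (i + 1) j then 0 else 1) * κ2 w := by
    intro i j hi hj w hw
    by_cases hll : L i j = L (i + 1) j
    · simp [hcr, hll]
    · have hcast : ((i + 1 : ℕ) : ℝ) = (i : ℝ) + 1 := by push_cast; ring
      have hedge1 : ({(((i : ℝ) + 1) / N)} ×ˢ Set.Icc ((j : ℝ) / N) (((j : ℝ) + 1) / N)
          : Set (ℝ × ℝ)) ⊆ Sq i j := by
        rintro z ⟨hz1, hz2⟩
        have hz1' : z.1 = ((i : ℝ) + 1) / N := hz1
        simp only [hSq, Set.mem_prod]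
        exact ⟨by rw [hz1']; exact ⟨hstepR i, le_rfl⟩, hz2⟩
      have hedge2 : ({(((i : ℝ) + 1) / N)} ×ˢ Set.Icc ((j : ℝ) / N) (((j : ℝ) + 1) / N)
          : Set (ℝ × ℝ)) ⊆ Sq (i + 1) j := by
        rintro z ⟨hz1, hz2⟩
        have hz1' : z.1 = ((i : ℝ) + 1) / N := hz1
        simp only [hSq, Set.mem_prod, hcast]
        refine ⟨?_, hz2⟩
        rw [hz1']
        exact ⟨le_rfl, by gcongr <;> linarith⟩
      -- the edge is contained in both `P` and `Q`
      have hPQedge : ({(((i : ℝ) + 1) / N)} ×ˢ Set.Icc ((j : ℝ) / N) (((j : ℝ) + 1) / N)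
          : Set (ℝ × ℝ)) ⊆ P ∧
          ({(((i : ℝ) + 1) / N)} ×ˢ Set.Icc ((j : ℝ) / N) (((j : ℝ) + 1) / N)
          : Set (ℝ × ℝ)) ⊆ Q := by
        have h1 := hLmem i j (Nat.lt_of_succ_lt hi) hj
        have h2 := hLmem (i + 1) j hi hj
        cases hij : L i j
        · rw [hij] at h1 hll
          cases hij2 : L (i + 1) j
          · exact absurd rfl (by rw [hij2] at hll; exact hll)
          · rw [hij2] at h2
            simp only [if_true, if_false, Bool.false_eq_true] at h1 h2
            exact ⟨hedge2.trans h2, hedge1.trans h1⟩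
        · rw [hij] at h1 hll
          cases hij2 : L (i + 1) j
          · rw [hij2] at h2
            simp only [if_true, if_false, Bool.false_eq_true] at h1 h2
            exact ⟨hedge1.trans h1, hedge2.trans h2⟩
          · exact absurd rfl (by rw [hij2] at hll; exact hll)
      have hpre : IsPreconnected ({(((i : ℝ) + 1) / N)} ×ˢ
          Set.Icc ((j : ℝ) / N) (((j : ℝ) + 1) / N) : Set (ℝ × ℝ)) :=
        isPreconnected_singleton.prod isPreconnected_Icc
      have hvmem : ((((i : ℝ) + 1) / N), (j : ℝ) / N) ∈
          ({(((i : ℝ) + 1) / N)} ×ˢ Set.Icc ((j : ℝ) / N) (((j : ℝ) + 1) / N) : Set (ℝ × ℝ)) :=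
        ⟨rfl, ⟨le_rfl, hstepR j⟩⟩
      have := hκconst _ hpre hPQedge.1 hPQedge.2 _ hvmem w hw
      rw [hcr]
      simp only [hll, if_false]
      rw [this]
  -- evaluation of `cu` at an arbitrary point of the separating edge
  have hedgeU : ∀ i j : ℕ, i < m + 1 → j + 1 < m + 1 →
      ∀ w ∈ (Set.Icc ((i : ℝ) / N) (((i : ℝ) + 1) / N) ×ˢ {(((j : ℝ) + 1) / N)} : Set (ℝ × ℝ)),
      cu i j = (if L i j = L i (j + 1) then 0 else 1) * κ2 w := by
    intro i j hi hj w hw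
    by_cases hll : L i j = L i (j + 1)
    · simp [hcu, hll]
    · have hcast : ((j + 1 : ℕ) : ℝ) = (j : ℝ) + 1 := by push_cast; ring
      have hedge1 : (Set.Icc ((i : ℝ) / N) (((i : ℝ) + 1) / N) ×ˢ {(((j : ℝ) + 1) / N)}
          : Set (ℝ × ℝ)) ⊆ Sq i j := by
        rintro z ⟨hz1, hz2⟩
        have hz2' : z.2 = ((j : ℝ) + 1) / N := hz2
        simp only [hSq, Set.mem_prod]
        exact ⟨hz1, by rw [hz2']; exact ⟨hstepR j, le_rfl⟩⟩
      have hedge2 : (Set.Icc ((i : ℝ) / N) (((i : ℝ) + 1) / N) ×ˢ {(((j : ℝ) + 1) / N)}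
          : Set (ℝ × ℝ)) ⊆ Sq i (j + 1) := by
        rintro z ⟨hz1, hz2⟩
        have hz2' : z.2 = ((j : ℝ) + 1) / N := hz2
        simp only [hSq, Set.mem_prod, hcast]
        refine ⟨hz1, ?_⟩
        rw [hz2']
        exact ⟨le_rfl, by gcongr <;> linarith⟩
      have hPQedge : (Set.Icc ((i : ℝ) / N) (((i : ℝ) + 1) / N) ×ˢ {(((j : ℝ) + 1) / N)}
          : Set (ℝ × ℝ)) ⊆ P ∧
          (Set.Icc ((i : ℝ) / N) (((i : ℝ) + 1) / N) ×ˢ {(((j : ℝ) + 1) / N)}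
          : Set (ℝ × ℝ)) ⊆ Q := by
        have h1 := hLmem i j hi (Nat.lt_of_succ_lt hj)
        have h2 := hLmem i (j + 1) hi hj
        cases hij : L i j
        · rw [hij] at h1 hll
          cases hij2 : L i (j + 1)
          · exact absurd rfl (by rw [hij2] at hll; exact hll)
          · rw [hij2] at h2
            simp only [if_true, if_false, Bool.false_eq_true] at h1 h2
            exact ⟨hedge2.trans h2, hedge1.trans h1⟩
        · rw [hij] at h1 hll
          cases hij2 : L i (j + 1)
          · rw [hij2] at h2
            simp only [if_true, if_false, Bool.false_eq_true] at h1 h2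
            exact ⟨hedge1.trans h1, hedge2.trans h2⟩
          · exact absurd rfl (by rw [hij2] at hll; exact hll)
      have hpre : IsPreconnected (Set.Icc ((i : ℝ) / N) (((i : ℝ) + 1) / N) ×ˢ
          {(((j : ℝ) + 1) / N)} : Set (ℝ × ℝ)) :=
        isPreconnected_Icc.prod isPreconnected_singleton
      have hvmem : (((i : ℝ) / N), ((j : ℝ) + 1) / N) ∈
          (Set.Icc ((i : ℝ) / N) (((i : ℝ) + 1) / N) ×ˢ {(((j : ℝ) + 1) / N)} : Set (ℝ × ℝ)) :=
        ⟨⟨le_rfl, hstepR i⟩, rfl⟩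
      have := hκconst _ hpre hPQedge.1 hPQedge.2 _ hvmem w hw
      rw [hcu]
      simp only [hll, if_false]
      rw [this]
  -- the four hypotheses of the abstract grid lemma
  have hcast1 : ∀ k : ℕ, ((k + 1 : ℕ) : ℝ) = (k : ℝ) + 1 := by intro k; push_cast; ring
  have hcell : ∀ i j, i + 1 < m + 1 → j + 1 < m + 1 →
      cr i j + cu (i + 1) j = cu i j + cr i (j + 1) := by
    intro i j hi hj
    have hv : ((((i : ℝ) + 1) / N), ((j : ℝ) + 1) / N) ∈
        ({(((i : ℝ) + 1) / N)} ×ˢ Set.Icc ((j : ℝ) / N) (((j : ℝ) + 1) / N) : Set (ℝ × ℝ)) :=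
      ⟨rfl, ⟨hstepR j, le_rfl⟩⟩
    have h1 := hedgeR i j hi (Nat.lt_of_succ_lt hj) _ hv
    have hv2 : ((((i : ℝ) + 1) / N), ((j : ℝ) + 1) / N) ∈
        (Set.Icc ((i : ℝ) / N) (((i : ℝ) + 1) / N) ×ˢ {(((j : ℝ) + 1) / N)} : Set (ℝ × ℝ)) :=
      ⟨⟨hstepR i, le_rfl⟩, rfl⟩
    have h2 := hedgeU i j (Nat.lt_of_succ_lt hi) hj _ hv2
    have h3 : cu (i + 1) j =
        (if L (i + 1) j = L (i + 1) (j + 1) then 0 else 1) *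
          κ2 ((((i : ℝ) + 1) / N), ((j : ℝ) + 1) / N) := by
      simp only [hcu, hcast1]
    have h4 : cr i (j + 1) =
        (if L i (j + 1) = L (i + 1) (j + 1) then 0 else 1) *
          κ2 ((((i : ℝ) + 1) / N), ((j : ℝ) + 1) / N) := by
      simp only [hcr, hcast1]
    rw [h1, h2, h3, h4]
    exact key_bool_identity (L i j) (L (i + 1) j) (L i (j + 1)) (L (i + 1) (j + 1)) _
  have hcr0 : ∀ k, cr k 0 = 0 := by
    intro k
    have : κ2 (((k : ℝ) + 1) / N, ((0 : ℕ) : ℝ) / N) = 0 := by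
      have hz : (((0 : ℕ) : ℝ) / N) = (0 : ℝ) := by norm_num
      rw [hκ2]
      simp only [hz]
      rw [hGs0]
      simp [hanB]
    simp only [hcr]
    rw [this, mul_zero]
  have h1N : ((m : ℝ) + 1) / N = 1 := div_self hNpos.ne'
  have hone_mem : (1 : ℝ) ∈ Set.Icc ((m : ℝ) / N) (((m : ℝ) + 1) / N) := by
    rw [h1N]
    refine ⟨?_, le_rfl⟩
    rw [div_le_one hNpos]; linarith
  have hcum : ∀ l, l + 1 < m + 1 → cu m l = 0 := by
    intro l hl
    have := hedgeU m l (Nat.lt_succ_self m) hl (1, ((l : ℝ) + 1) / N) ⟨hone_mem, rfl⟩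
    rw [this, hκ2]
    simp only [hG1]
    simp [hanB]
  have hcrtop : ∀ i, i + 1 < m + 1 → cr i m = 0 := by
    intro i hi
    have := hedgeR i m hi (Nat.lt_succ_self m) ((((i : ℝ) + 1) / N), 1) ⟨rfl, hone_mem⟩
    rw [this, hκ2]
    simp only [hGs1]
    simp [hanB]
  have hgrid := grid_lemma m cr cu hcell hcr0 hcum hcrtop
  -- identification of the left column with the 1-dimensional monodromy
  have hlab1 : ∀ j, j < m + 1 →
      ∀ t ∈ Set.Icc ((j : ℝ) / ((m : ℝ) + 1)) (((j : ℝ) + 1) / ((m : ℝ) + 1)),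
      (p.trans q).extend t ∈ (if L 0 j then U else V) := by
    intro j hj t ht
    have hmem : ((0 : ℝ), t) ∈ Sq 0 j := by
      simp only [hSq, Set.mem_prod]
      constructor
      · simp only [Nat.cast_zero, zero_div]
        exact ⟨le_rfl, by positivity⟩
      · exact ht
    have := hLmem 0 j (Nat.zero_lt_succ m) hj hmem
    cases hl0 : L 0 j
    · rw [hl0] at this
      simp only [Bool.false_eq_true, if_false] at this ⊢
      rw [← hG0 t]
      exact this
    · rw [hl0] at this
      simp only [if_true] at this ⊢
      rw [← hG0 t]
      exact this
  have honeD := oneD hA hB hUVB hU'U hcov hdisj ha hb p hp q hq m (fun j => L 0 j) hlab1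
  have hcontra : ∑ l ∈ Finset.range m, cu 0 l = 1 := by
    rw [← honeD]
    apply Finset.sum_congr rfl
    intro l _
    rw [hcu, hκ2]
    simp only [Nat.cast_zero, zero_div]
    rw [hG0]
  rw [hgrid] at hcontra
  exact absurd hcontra (by decide)

/-- Let `T` be a nonempty contractible, locally path-connected
topological space and `U, V ⊆ T` open subsets with `T = U ∪ V` and `V` nonempty and
connected.  Then for every connected component `U'` of `U` (i.e. the connected
component in `U` of a point `x ∈ U`), the intersection `U' ∩ V` is nonempty and
connected. -/
theorem component_inter_connected_of_contractible
    {T : Type*} [TopologicalSpace T] [Nonempty T] [ContractibleSpace T]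
    [LocallyPathConnectedSpace T] (U V : Set T) (hU : IsOpen U) (hV : IsOpen V)
    (hUV : U ∪ V = Set.univ) (hVconn : IsConnected V) :
    ∀ x ∈ U, (connectedComponentIn U x ∩ V).Nonempty ∧
      IsConnected (connectedComponentIn U x ∩ V) := by
  intro x hx
  classical
  set U' := connectedComponentIn U x with hU'def
  have hU'open : IsOpen U' := hU.connectedComponentIn
  have hU'conn : IsConnected U' := isConnected_connectedComponentIn_iff.mpr hx
  have hU'sub : U' ⊆ U := connectedComponentIn_subset U x
  -- the union of the other components of `U` is open
  have hUdiff : IsOpen (U \ U') := by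
    have heq : U \ U' = ⋃ y ∈ U \ U', connectedComponentIn U y := by
      apply Set.Subset.antisymm
      · intro y hy
        exact Set.mem_biUnion hy (mem_connectedComponentIn hy.1)
      · intro z hz
        rw [Set.mem_iUnion₂] at hz
        obtain ⟨y, hy, hzy⟩ := hz
        refine ⟨connectedComponentIn_subset U y hzy, fun hzU' => ?_⟩
        have h1 : connectedComponentIn U y = connectedComponentIn U z :=
          connectedComponentIn_eq hzy
        have h2 : connectedComponentIn U x = connectedComponentIn U z :=
          connectedComponentIn_eq hzU'
        exact hy.2 (by rw [hU'def, h2, ← h1]; exact mem_connectedComponentIn hy.1)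
    rw [heq]
    exact isOpen_biUnion fun y _ => hU.connectedComponentIn
  -- part 1 : the intersection is nonempty
  have hne : (U' ∩ V).Nonempty := by
    by_contra hemp
    rw [Set.not_nonempty_iff_eq_empty] at hemp
    have hclopen : IsClopen U' := by
      constructor
      · rw [← isOpen_compl_iff]
        have hcompl : U'ᶜ = (U \ U') ∪ V := by
          ext z
          simp only [Set.mem_compl_iff, Set.mem_union, Set.mem_diff]
          constructor
          · intro hz
            have : z ∈ U ∪ V := by rw [hUV]; trivial
            rcases this with h | h
            · exact Or.inl ⟨h, hz⟩
            · exact Or.inr h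
          · rintro (⟨_, h⟩ | h)
            · exact h
            · intro hz
              have : z ∈ U' ∩ V := ⟨hz, h⟩
              rw [hemp] at this
              exact this
        rw [hcompl]
        exact hUdiff.union hV
      · exact hU'open
    rcases isClopen_iff.mp hclopen with h | h
    · exact (connectedComponentIn_nonempty_iff.mpr hx).ne_empty h
    · obtain ⟨v0, hv0⟩ := hVconn.nonempty
      have : v0 ∈ U' ∩ V := ⟨by rw [h]; trivial, hv0⟩
      rw [hemp] at this
      exact this
  refine ⟨hne, hne, ?_⟩
  -- part 2 : the intersection is preconnected
  by_contra hnpc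
  rw [isPreconnected_iff_subset_of_disjoint] at hnpc
  push_neg at hnpc
  obtain ⟨u, v, huo, hvo, hsub, hdis, hnu, hnv⟩ := hnpc
  set A := (U' ∩ V) ∩ u with hAdef
  set B := (U' ∩ V) ∩ v with hBdef
  have hcov : U' ∩ V = A ∪ B := by
    rw [hAdef, hBdef, ← Set.inter_union_distrib_left]
    exact (Set.inter_eq_left.mpr hsub).symm
  have hdisjAB : Disjoint A B := by
    rw [Set.disjoint_left]
    rintro z ⟨hz1, hz2⟩ ⟨_, hz3⟩
    have : z ∈ (U' ∩ V) ∩ (u ∩ v) := ⟨hz1, hz2, hz3⟩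
    rw [hdis] at this
    exact this
  have hAopen : IsOpen A := (hU'open.inter hV).inter huo
  have hBopen : IsOpen B := (hU'open.inter hV).inter hvo
  have hAne : A.Nonempty := by
    obtain ⟨z, hz, hznv⟩ := Set.not_subset.mp hnv
    have : z ∈ A ∪ B := by rw [← hcov]; exact hz
    rcases this with h | h
    · exact ⟨z, h⟩
    · exact absurd h.2 hznv
  have hBne : B.Nonempty := by
    obtain ⟨z, hz, hznu⟩ := Set.not_subset.mp hnu
    have : z ∈ A ∪ B := by rw [← hcov]; exact hz
    rcases this with h | h
    · exact absurd h.2 hznu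
    · exact ⟨z, h⟩
  obtain ⟨a, haA⟩ := hAne
  obtain ⟨b, hbB⟩ := hBne
  have haU'V : a ∈ U' ∩ V := by rw [hcov]; exact Or.inl haA
  have hbU'V : b ∈ U' ∩ V := by rw [hcov]; exact Or.inr hbB
  have hUVB : IsOpen ((U ∩ V) \ B) := by
    have heq : (U ∩ V) \ B = ((U \ U') ∩ V) ∪ A := by
      ext z
      constructor
      · rintro ⟨⟨hzU, hzV⟩, hzB⟩
        by_cases hz' : z ∈ U'
        · have : z ∈ A ∪ B := by rw [← hcov]; exact ⟨hz', hzV⟩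
          rcases this with h | h
          · exact Or.inr h
          · exact absurd h hzB
        · exact Or.inl ⟨⟨hzU, hz'⟩, hzV⟩
      · rintro (⟨⟨hzU, hz'⟩, hzV⟩ | hzA)
        · refine ⟨⟨hzU, hzV⟩, fun hzB => hz' ?_⟩
          have : z ∈ U' ∩ V := by rw [hcov]; exact Or.inr hzB
          exact this.1
        · have hz2 : z ∈ U' ∩ V := by rw [hcov]; exact Or.inl hzA
          exact ⟨⟨hU'sub hz2.1, hz2.2⟩, fun hzB => Set.disjoint_left.mp hdisjAB hzA hzB⟩
    rw [heq]
    exact (hUdiff.inter hV).union hAopen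
  have hU'path : IsPathConnected U' := hU'open.isConnected_iff_isPathConnected.mp hU'conn
  have hVpath : IsPathConnected V := hV.isConnected_iff_isPathConnected.mp hVconn
  have hjp : JoinedIn U' a b := hU'path.joinedIn a haU'V.1 b hbU'V.1
  have hjq : JoinedIn V b a := hVpath.joinedIn b hbU'V.2 a haU'V.2
  have hhom : Path.Homotopic (hjp.somePath.trans hjq.somePath) (Path.refl a) :=
    SimplyConnectedSpace.paths_homotopic _ _
  exact no_homotopy hU hV hAopen hBopen hUVB hU'sub hcov hdisjAB hUV haA hbB
    hjp.somePath hjp.somePath_mem hjq.somePath hjq.somePath_mem hhom.some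
end
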